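/- arXiv:0804.4780 — 2 statements merged into one kernel-verified Lean document; each statement's English description precedes it below -/
import Mathlib

section
/- The map (α, β) ↦ 6π α / β⁴ from (0,∞)² to (0,∞) is surjective but not injective; however, the joint map (α, β) ↦ (6π α/β⁴, 36π² α²/β⁸ + 24π α/β⁵) from (0,∞)² to ℝ² is injective. -/
open Real

theorem stmt_12 :
    (∀ y : ℝ, 0 < y → ∃ α β : ℝ, 0 < α ∧ 0 < β ∧ 6 * π * α / β ^ 4 = y) ∧
    (∃ α β α' β' : ℝ, 0 < α ∧ 0 < β ∧ 0 < α' ∧ 0 < β' ∧ (α, β) ≠ (α', β') ∧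
      6 * π * α / β ^ 4 = 6 * π * α' / β' ^ 4) ∧
    (∀ α β α' β' : ℝ, 0 < α → 0 < β → 0 < α' → 0 < β' →
      (6 * π * α / β ^ 4, 36 * π ^ 2 * α ^ 2 / β ^ 8 + 24 * π * α / β ^ 5)
        = (6 * π * α' / β' ^ 4, 36 * π ^ 2 * α' ^ 2 / β' ^ 8 + 24 * π * α' / β' ^ 5) →
      (α, β) = (α', β')) := by
  have hπ := Real.pi_pos
  refine ⟨?_, ?_, ?_⟩
  · intro y hy
    refine ⟨y / (6 * π), 1, by positivity, one_pos, ?_⟩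
    field_simp
  · exact ⟨1, 1, 16, 2, one_pos, one_pos, by norm_num, by norm_num,
      by simp [Prod.ext_iff], by norm_num⟩
  · intro α β α' β' hα hβ hα' hβ' h
    rw [Prod.mk.injEq] at h ⊢
    obtain ⟨h1, h2⟩ := h
    -- first moment squared
    have sqL : 36 * π ^ 2 * α ^ 2 / β ^ 8 = (6 * π * α / β ^ 4) ^ 2 := by
      field_simp; ring
    have sqR : 36 * π ^ 2 * α' ^ 2 / β' ^ 8 = (6 * π * α' / β' ^ 4) ^ 2 := by
      field_simp; ring
    have h3 : 24 * π * α / β ^ 5 = 24 * π * α' / β' ^ 5 := by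
      rw [sqL, sqR, h1] at h2; linarith
    have e1 : α * β' ^ 4 = α' * β ^ 4 := by
      field_simp at h1
      exact mul_left_cancel₀ (show (6 * π : ℝ) ≠ 0 by positivity)
        (by linear_combination (6 * π) * h1)
    have e2 : α * β' ^ 5 = α' * β ^ 5 := by
      field_simp at h3
      exact mul_left_cancel₀ (show (24 * π : ℝ) ≠ 0 by positivity)
        (by linear_combination (24 * π) * h3)
    have hββ : β = β' := by
      have key : α * β' ^ 4 * β = α * β' ^ 4 * β' := by
        calc α * β' ^ 4 * β = α' * β ^ 4 * β := by rw [e1]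
        _ = α' * β ^ 5 := by ring
        _ = α * β' ^ 5 := e2.symm
        _ = α * β' ^ 4 * β' := by ring
      exact mul_left_cancel₀ (show α * β' ^ 4 ≠ 0 by positivity) key
    subst hββ
    refine ⟨?_, rfl⟩
    have hb : (β ^ 4 : ℝ) ≠ 0 := by positivity
    exact mul_right_cancel₀ hb e1
end

section
/- Let U : ℝ^p → ℝ be C² with a local minimizer θ̂ (so grad U(θ̂) = 0 and H U(θ̂) positive definite), and let c : ℝ^p → (0,∞) be C¹. For t > 0 define F_t(α) = U(α) − (1/t)·log c(α). Then any critical point θ̃_t of F_t satisfies grad U(θ̃_t) = (1/(t·c(θ̃_t)))·grad c(θ̃_t); and if θ̃_t → θ̂ as t → ∞ with H U continuous and invertible at θ̂, then t·(θ̃_t − θ̂) → (H U(θ̂))⁻¹ · grad c(θ̂)/c(θ̂). -/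
open Filter InnerProductSpace Asymptotics

set_option maxHeartbeats 1600000 in
theorem stmt_18 (p : ℕ) (U c : EuclideanSpace ℝ (Fin p) → ℝ)
    (hU : ContDiff ℝ 2 U) (hc : ContDiff ℝ 1 c) (hcpos : ∀ x, 0 < c x)
    (θhat : EuclideanSpace ℝ (Fin p))
    (hcrit : gradient U θhat = 0)
    (hHpos : ∀ v : EuclideanSpace ℝ (Fin p), v ≠ 0 →
      0 < (inner ℝ (fderiv ℝ (gradient U) θhat v) v : ℝ))
    -- `H'` is the (invertible) Hessian of `U` at `θ̂`
    (H' : EuclideanSpace ℝ (Fin p) ≃L[ℝ] EuclideanSpace ℝ (Fin p))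
    (hH' : (H' : EuclideanSpace ℝ (Fin p) →L[ℝ] EuclideanSpace ℝ (Fin p))
      = fderiv ℝ (gradient U) θhat)
    (hHcont : Continuous fun x => fderiv ℝ (gradient U) x) :
    -- first-order condition for any critical point of the penalized contrast
    (∀ t : ℝ, 0 < t → ∀ θ : EuclideanSpace ℝ (Fin p),
      gradient (fun α => U α - (1 / t) * Real.log (c α)) θ = 0 →
      gradient U θ = (1 / (t * c θ)) • gradient c θ) ∧
    -- asymptotic deviation of the penalized critical points
    (∀ θt : ℝ → EuclideanSpace ℝ (Fin p),
      (∀ t : ℝ, 0 < t →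
        gradient (fun α => U α - (1 / t) * Real.log (c α)) (θt t) = 0) →
      Tendsto θt atTop (nhds θhat) →
      Tendsto (fun t : ℝ => t • (θt t - θhat)) atTop
        (nhds (H'.symm ((c θhat)⁻¹ • gradient c θhat)))) := by
  have hUd : Differentiable ℝ U := hU.differentiable (by norm_num)
  have hcd : Differentiable ℝ c := hc.differentiable (by norm_num)
  -- Part 1
  have part1 : ∀ t : ℝ, 0 < t → ∀ θ : EuclideanSpace ℝ (Fin p),
      gradient (fun α => U α - (1 / t) * Real.log (c α)) θ = 0 →
      gradient U θ = (1 / (t * c θ)) • gradient c θ := by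
    intro t ht θ hθ
    have hcne : c θ ≠ 0 := (hcpos θ).ne'
    have dlog : HasFDerivAt (fun α => Real.log (c α)) ((c θ)⁻¹ • fderiv ℝ c θ) θ :=
      (hcd θ).hasFDerivAt.log hcne
    have dF : HasFDerivAt (fun α => U α - (1 / t) * Real.log (c α))
        (fderiv ℝ U θ - (1 / t) • ((c θ)⁻¹ • fderiv ℝ c θ)) θ :=
      (hUd θ).hasFDerivAt.sub (dlog.const_mul (1 / t))
    have hfd : fderiv ℝ (fun α => U α - (1 / t) * Real.log (c α)) θ
        = fderiv ℝ U θ - (1 / t) • ((c θ)⁻¹ • fderiv ℝ c θ) := dF.fderiv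
    have h0 : (toDual ℝ (EuclideanSpace ℝ (Fin p))).symm
        (fderiv ℝ U θ - (1 / t) • ((c θ)⁻¹ • fderiv ℝ c θ)) = 0 := by
      rw [← hfd]; exact hθ
    rw [map_sub, map_smul, map_smul, sub_eq_zero] at h0
    have h1 : gradient U θ = (1 / t) • (c θ)⁻¹ • gradient c θ := h0
    rw [h1, smul_smul]
    congr 1
    field_simp
  refine ⟨part1, ?_⟩
  intro θt hθt hlim
  set g : EuclideanSpace ℝ (Fin p) := (c θhat)⁻¹ • gradient c θhat with hg
  -- key identity from part 1
  have hkey : ∀ t : ℝ, 0 < t →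
      t • gradient U (θt t) = (c (θt t))⁻¹ • gradient c (θt t) := by
    intro t ht
    rw [part1 t ht (θt t) (hθt t ht), smul_smul]
    congr 1
    have h1 : t ≠ 0 := ht.ne'
    have h2 : c (θt t) ≠ 0 := (hcpos _).ne'
    field_simp
  -- continuity of x ↦ (c x)⁻¹ • gradient c x
  have hgc : Continuous fun x => gradient c x :=
    (LinearIsometryEquiv.continuous _).comp (hc.continuous_fderiv one_ne_zero)
  have hφ : Continuous fun x : EuclideanSpace ℝ (Fin p) => (c x)⁻¹ • gradient c x :=
    (hc.continuous.inv₀ fun x => (hcpos x).ne').smul hgc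
  set v : ℝ → EuclideanSpace ℝ (Fin p) :=
    fun t => (c (θt t))⁻¹ • gradient c (θt t) with hvdef
  have hv : Tendsto v atTop (nhds g) := (hφ.tendsto θhat).comp hlim
  -- differentiability of gradient U at θhat, little-o
  have hdg : Differentiable ℝ (gradient U) := by
    have h1 : ContDiff ℝ 1 (fderiv ℝ U) := hU.fderiv_right (by norm_num)
    exact ((toDual ℝ (EuclideanSpace ℝ (Fin p))).symm.toContinuousLinearEquiv.differentiable).comp
      (h1.differentiable one_ne_zero)
  have hFD : HasFDerivAt (gradient U) (fderiv ℝ (gradient U) θhat) θhat :=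
    (hdg θhat).hasFDerivAt
  rw [← hH'] at hFD
  set r : EuclideanSpace ℝ (Fin p) → EuclideanSpace ℝ (Fin p) :=
    fun x => gradient U x - H' (x - θhat) with hrdef
  have hlo : r =o[nhds θhat] fun x => x - θhat := by
    have h2 := hFD.isLittleO
    simpa [hrdef, hcrit, map_sub] using h2
  have hloB : ∀ ε : ℝ, 0 < ε → ∀ᶠ t : ℝ in atTop, ‖r (θt t)‖ ≤ ε * ‖θt t - θhat‖ := by
    intro ε hε
    exact hlim.eventually (hlo.def hε)
  set Hs := (H'.symm : EuclideanSpace ℝ (Fin p) →L[ℝ] EuclideanSpace ℝ (Fin p)) with hHs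
  obtain ⟨C, hCdef⟩ : ∃ C : ℝ, C = ‖Hs‖ + 1 := ⟨_, rfl⟩
  have hC : 0 < C := by rw [hCdef]; positivity
  have hnC : ‖Hs‖ ≤ C := by rw [hCdef]; exact (lt_add_one _).le
  -- identity: w t = Hs (v t - t • r (θt t))
  have ident : ∀ t : ℝ, 0 < t →
      t • (θt t - θhat) = Hs (v t - t • r (θt t)) := by
    intro t ht
    have h1 : (H' : EuclideanSpace ℝ (Fin p) →L[ℝ] EuclideanSpace ℝ (Fin p))
        (t • (θt t - θhat)) = v t - t • r (θt t) := by
      rw [map_smul]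
      have h2 : (H' : EuclideanSpace ℝ (Fin p) →L[ℝ] EuclideanSpace ℝ (Fin p)) (θt t - θhat)
          = gradient U (θt t) - r (θt t) := by
        simp [hrdef]
      rw [h2, smul_sub, hkey t ht]
    calc t • (θt t - θhat)
        = Hs ((H' : EuclideanSpace ℝ (Fin p) →L[ℝ] EuclideanSpace ℝ (Fin p))
            (t • (θt t - θhat))) := by simp [hHs]
      _ = Hs (v t - t • r (θt t)) := by rw [h1]
  -- eventual bounds
  have ev2 : ∀ᶠ t : ℝ in atTop, (0:ℝ) < t := eventually_gt_atTop 0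
  have ev3 : ∀ᶠ t : ℝ in atTop, ‖v t‖ ≤ ‖g‖ + 1 :=
    (hv.norm.eventually_lt_const (lt_add_one ‖g‖)).mono fun t ht => ht.le
  have ev1 : ∀ᶠ t : ℝ in atTop, ‖r (θt t)‖ ≤ (1 / (2 * C)) * ‖θt t - θhat‖ :=
    hloB _ (by positivity)
  obtain ⟨M, hMdef⟩ : ∃ M : ℝ, M = 2 * C * (‖g‖ + 1) := ⟨_, rfl⟩
  have hM : 0 < M := by rw [hMdef]; nlinarith [norm_nonneg g]
  have hboundW : ∀ᶠ t : ℝ in atTop, ‖t • (θt t - θhat)‖ ≤ M := by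
    filter_upwards [ev1, ev2, ev3] with t h1 h2 h3
    have hwr : ‖t • r (θt t)‖ ≤ (1 / (2 * C)) * ‖t • (θt t - θhat)‖ := by
      rw [norm_smul, norm_smul, Real.norm_eq_abs, abs_of_pos h2]
      calc t * ‖r (θt t)‖ ≤ t * ((1 / (2 * C)) * ‖θt t - θhat‖) :=
            mul_le_mul_of_nonneg_left h1 h2.le
        _ = (1 / (2 * C)) * (t * ‖θt t - θhat‖) := by ring
    have hwb : ‖t • (θt t - θhat)‖ ≤ C * (‖v t‖ + ‖t • r (θt t)‖) := by
      rw [ident t h2]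
      calc ‖Hs (v t - t • r (θt t))‖ ≤ ‖Hs‖ * ‖v t - t • r (θt t)‖ := Hs.le_opNorm _
        _ ≤ C * (‖v t‖ + ‖t • r (θt t)‖) :=
            mul_le_mul hnC (norm_sub_le _ _) (norm_nonneg _) hC.le
    have hhalf : C * (1 / (2 * C)) = 1 / 2 := by
      rw [mul_one_div, div_eq_div_iff (by positivity) (by norm_num : (2:ℝ) ≠ 0)]
      ring
    have f2 : C * ‖t • r (θt t)‖ ≤ (1 / 2) * ‖t • (θt t - θhat)‖ := by
      calc C * ‖t • r (θt t)‖ ≤ C * ((1 / (2 * C)) * ‖t • (θt t - θhat)‖) :=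
            mul_le_mul_of_nonneg_left hwr hC.le
        _ = (1 / 2) * ‖t • (θt t - θhat)‖ := by rw [← mul_assoc, hhalf]
    have f1 : C * ‖v t‖ ≤ C * (‖g‖ + 1) := mul_le_mul_of_nonneg_left h3 hC.le
    have hwb2 : ‖t • (θt t - θhat)‖ ≤ C * ‖v t‖ + C * ‖t • r (θt t)‖ := by
      rw [← mul_add]; exact hwb
    linarith [hMdef.ge]
  -- t • r (θt t) → 0
  have hr0 : Tendsto (fun t : ℝ => t • r (θt t)) atTop (nhds 0) := by
    rw [NormedAddCommGroup.tendsto_nhds_zero]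
    intro δ hδ
    have hε : (0:ℝ) < δ / (2 * (M + 1)) := div_pos hδ (by linarith)
    filter_upwards [hloB _ hε, ev2, hboundW] with t h1 h2 h3
    have h4 : ‖t • r (θt t)‖ ≤ (δ / (2 * (M + 1))) * ‖t • (θt t - θhat)‖ := by
      rw [norm_smul, norm_smul, Real.norm_eq_abs, abs_of_pos h2]
      calc t * ‖r (θt t)‖ ≤ t * ((δ / (2 * (M + 1))) * ‖θt t - θhat‖) :=
            mul_le_mul_of_nonneg_left h1 h2.le
        _ = (δ / (2 * (M + 1))) * (t * ‖θt t - θhat‖) := by ring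
    have h5 : (δ / (2 * (M + 1))) * ‖t • (θt t - θhat)‖ ≤ (δ / (2 * (M + 1))) * M :=
      mul_le_mul_of_nonneg_left h3 hε.le
    have h6 : (δ / (2 * (M + 1))) * M < δ := by
      rw [div_mul_eq_mul_div, div_lt_iff₀ (by linarith : (0:ℝ) < 2 * (M + 1))]
      nlinarith [hδ, hM]
    calc ‖t • r (θt t)‖ ≤ (δ / (2 * (M + 1))) * M := le_trans h4 h5
      _ < δ := h6
  -- conclude
  have hfinal : Tendsto (fun t : ℝ => Hs (v t - t • r (θt t))) atTop (nhds (Hs g)) := by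
    have h7 : Tendsto (fun t : ℝ => v t - t • r (θt t)) atTop (nhds (g - 0)) := hv.sub hr0
    rw [sub_zero] at h7
    exact (Hs.continuous.tendsto g).comp h7
  have hgoal : Tendsto (fun t : ℝ => t • (θt t - θhat)) atTop (nhds (Hs g)) := by
    refine Tendsto.congr' ?_ hfinal
    filter_upwards [ev2] with t ht
    exact (ident t ht).symm
  exact hgoal
end
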